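/- Let R ⊆ ℕ be a co-r-maximal set (i.e., R is r-cohesive and ℕ \ R is computably enumerable), and let f : ℕ → ℕ be a total computable function such that f(R) ∩ R is infinite. Then the restriction of f to R differs from the identity function only finitely: {n ∈ R : f(n) ≠ n} is finite. -/

import Mathlib

/-- `X ⊆* Y`: `X` is contained in `Y` up to finitely many elements. -/
def AlmostSubset (X Y : Set ℕ) : Prop := (X \ Y).Finite

/-- `W ⊆ ℕ` is computably enumerable: it is the domain of a partial computable function. -/
def CESet (W : Set ℕ) : Prop := ∃ f : ℕ →. ℕ, Partrec f ∧ W = f.Dom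

/-- `W ⊆ ℕ` is computable (decidable). -/
def ComputableSet (W : Set ℕ) : Prop :=
  ∃ f : ℕ → Bool, Computable f ∧ ∀ n, n ∈ W ↔ f n = true

/-- `C ⊆ ℕ` is cohesive: `C` is infinite, and for every c.e. set `W`, either `W ∩ C`
or `Wᶜ ∩ C` is finite. -/
def Cohesive (C : Set ℕ) : Prop :=
  C.Infinite ∧ ∀ W : Set ℕ, CESet W → (W ∩ C).Finite ∨ (Wᶜ ∩ C).Finite

/-- `C ⊆ ℕ` is r-cohesive. -/
def RCohesive (C : Set ℕ) : Prop :=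
  C.Infinite ∧ ∀ W : Set ℕ, ComputableSet W → (W ∩ C).Finite ∨ (Wᶜ ∩ C).Finite

/-- `C` is co-maximal: its complement is maximal, i.e. `C` is cohesive with c.e. complement. -/
def CoMaximal (C : Set ℕ) : Prop := Cohesive C ∧ CESet Cᶜ

/-- A computable (decidable) binary relation on `ℕ`. -/
def ComputableRel (r : ℕ → ℕ → Prop) : Prop :=
  ∃ f : ℕ → ℕ → Bool, Computable₂ f ∧ ∀ m n, r m n ↔ f m n = true

/-- `y` is the immediate successor of `x` with respect to the strict order `r`. -/
def ImmSucc {α : Type*} (r : α → α → Prop) (x y : α) : Prop :=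
  r x y ∧ ∀ z, ¬(r x z ∧ r z y)

/-- A strict order on `ℕ` has order type ω when it is isomorphic to `(ℕ, <)`. -/
def OrderTypeOmega (r : ℕ → ℕ → Prop) : Prop :=
  Nonempty (r ≃r ((· < ·) : ℕ → ℕ → Prop))

/-- Carrier of the cohesive power: partial computable functions whose domain
almost contains `C`. -/
def CohCarrier (C : Set ℕ) : Type :=
  {φ : ℕ →. ℕ // Partrec φ ∧ (C \ φ.Dom).Finite}

/-- Two partial functions agree (are defined and equal) on almost all of `C`. -/
def eqAE (C : Set ℕ) (φ ψ : ℕ →. ℕ) : Prop :=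
  (C \ {n | ∃ a, a ∈ φ n ∧ a ∈ ψ n}).Finite

/-- The equivalence relation underlying the cohesive power. -/
def cohSetoid (C : Set ℕ) : Setoid (CohCarrier C) where
  r φ ψ := eqAE C φ.1 ψ.1
  iseqv := by
    constructor
    · intro φ
      refine φ.2.2.subset fun n hn => ⟨hn.1, fun hd => hn.2 ?_⟩
      obtain ⟨a, ha⟩ := (PFun.mem_dom _ _).mp hd
      exact ⟨a, ha, ha⟩
    · intro φ ψ h
      exact h.subset fun n hn => ⟨hn.1, fun ⟨a, h1, h2⟩ => hn.2 ⟨a, h2, h1⟩⟩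
    · intro φ ψ χ h1 h2
      refine (h1.union h2).subset fun n hn => ?_
      by_cases hmem : ∃ a, a ∈ φ.1 n ∧ a ∈ ψ.1 n
      · obtain ⟨a, ha1, ha2⟩ := hmem
        refine Or.inr ⟨hn.1, fun ⟨b, hb1, hb2⟩ => hn.2 ⟨a, ha1, ?_⟩⟩
        rwa [Part.mem_unique ha2 hb1]
      · exact Or.inl ⟨hn.1, hmem⟩

/-- The domain of the cohesive power of a computable structure on `ℕ` over `C`. -/
def CohPow (C : Set ℕ) : Type := Quotient (cohSetoid C)

/-- The class of a partial computable function in the cohesive power. -/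
def CohPow.mk {C : Set ℕ} (φ : CohCarrier C) : CohPow C := Quotient.mk (cohSetoid C) φ

/-- `φ(n) ≺ ψ(n)` (both defined) for almost all `n ∈ C`. -/
def ltAE (C : Set ℕ) (r : ℕ → ℕ → Prop) (φ ψ : ℕ →. ℕ) : Prop :=
  (C \ {n | ∃ a b, a ∈ φ n ∧ b ∈ ψ n ∧ r a b}).Finite

/-- The order of the cohesive power of the computable linear order `(ℕ, r)` over `C`. -/
def CohPow.Lt (C : Set ℕ) (r : ℕ → ℕ → Prop) (x y : CohPow C) : Prop :=
  ∃ φ ψ : CohCarrier C, x = CohPow.mk φ ∧ y = CohPow.mk ψ ∧ ltAE C r φ.1 ψ.1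

/-- The sum `L₀ + L₁` of two linear orders on `ℕ`, coded on `ℕ` via the computable
pairing `⟨0, l⟩ ↦ 2l`, `⟨1, l⟩ ↦ 2l + 1`. -/
def sumRel (r₀ r₁ : ℕ → ℕ → Prop) (m n : ℕ) : Prop :=
  (m % 2 = 0 ∧ n % 2 = 1) ∨
  (m % 2 = 0 ∧ n % 2 = 0 ∧ r₀ (m / 2) (n / 2)) ∨
  (m % 2 = 1 ∧ n % 2 = 1 ∧ r₁ (m / 2) (n / 2))

/-- The lexicographic product `L₀ ×ₗ L₁` (first coordinate dominant) of two linear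
orders on `ℕ`, coded on `ℕ` via the computable pairing `Nat.pair`. -/
def lexRel (r₀ r₁ : ℕ → ℕ → Prop) (m n : ℕ) : Prop :=
  r₀ m.unpair.1 n.unpair.1 ∨ (m.unpair.1 = n.unpair.1 ∧ r₁ m.unpair.2 n.unpair.2)

/-- The strict order of `ℕ + ℚ ×ₗ ℤ`. -/
def NQZlt : ℕ ⊕ ℚ × ℤ → ℕ ⊕ ℚ × ℤ → Prop :=
  Sum.Lex (· < ·) (Prod.Lex (· < ·) (· < ·))

/-- The element of the cohesive power represented by the constant function `k`. -/
def constElt (C : Set ℕ) (k : ℕ) : CohPow C :=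
  CohPow.mk ⟨fun _ => Part.some k, Partrec.const' (Part.some k), by
    have : (PFun.Dom fun _ : ℕ => Part.some k) = Set.univ := by
      ext n; simp [PFun.Dom]
    rw [this, Set.diff_univ]; exact Set.finite_empty⟩

/-- The element of the cohesive power represented by the identity function. -/
def idElt (C : Set ℕ) : CohPow C :=
  CohPow.mk ⟨fun n => Part.some n, Partrec.some, by
    have : (PFun.Dom fun n : ℕ => Part.some n) = Set.univ := by
      ext n; simp [PFun.Dom]
    rw [this, Set.diff_univ]; exact Set.finite_empty⟩


namespace LermanAux

section Chain
variable (P : ℕ → Bool) (g : ℕ → ℕ)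

/-- One step of the chain-following machine. -/
def cstep (p : ℕ × ℕ) : ℕ × ℕ := bif P p.1 then (g p.1, p.2 + 1) else p

/-- Chain length from `a`, computed with fuel `μ a`. -/
def clen (μ : ℕ → ℕ) (a : ℕ) : ℕ := ((cstep P g)^[μ a] (a, 0)).2

lemma cstep_true {a c : ℕ} (hP : P a = true) : cstep P g (a, c) = (g a, c + 1) := by
  simp [cstep, hP]

lemma cstep_false {a c : ℕ} (hP : P a = false) : cstep P g (a, c) = (a, c) := by
  simp [cstep, hP]

lemma cstep_shift : ∀ (k a c : ℕ), (cstep P g)^[k] (a, c) =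
    (((cstep P g)^[k] (a, 0)).1, c + ((cstep P g)^[k] (a, 0)).2) := by
  intro k
  induction k with
  | zero => intro a c; simp
  | succ k ih =>
    intro a c
    rw [Function.iterate_succ_apply, Function.iterate_succ_apply]
    cases hP : P a
    · rw [cstep_false P g hP, cstep_false P g hP]
      exact ih a c
    · rw [cstep_true P g hP, cstep_true P g hP, ih (g a) (c+1), ih (g a) 1]
      rw [Prod.ext_iff]
      constructor
      · rfl
      · simp only []; omega

variable (μ : ℕ → ℕ) (hμ : ∀ a, P a = true → μ (g a) < μ a)

include hμ

lemma cstep_disj : ∀ (k a c : ℕ),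
    (cstep P g)^[k+1] (a, c) = (cstep P g)^[k] (a, c) ∨
    μ (((cstep P g)^[k] (a, c)).1) + k ≤ μ a := by
  intro k
  induction k with
  | zero => intro a c; right; simp
  | succ k ih =>
    intro a c
    rcases ih a c with h | h
    · left
      rw [Function.iterate_succ_apply' (cstep P g) (k+1), h,
        ← Function.iterate_succ_apply' (cstep P g) k, h]
    · set x := (cstep P g)^[k] (a, c) with hx
      cases hP : P x.1
      · left
        have hfix : cstep P g x = x := by unfold cstep; rw [hP]; simp
        rw [Function.iterate_succ_apply' (cstep P g) (k+1),
          Function.iterate_succ_apply' (cstep P g) k, ← hx, hfix, hfix]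
      · right
        rw [Function.iterate_succ_apply' (cstep P g) k, ← hx]
        have : cstep P g x = (g x.1, x.2 + 1) := by unfold cstep; rw [hP]; simp
        rw [this]
        have := hμ x.1 hP
        simp only []
        omega

lemma cstep_fix : ∀ (a c : ℕ), cstep P g ((cstep P g)^[μ a] (a, c)) = (cstep P g)^[μ a] (a, c) := by
  intro a c
  rcases cstep_disj P g μ hμ (μ a) a c with h | h
  · rwa [Function.iterate_succ_apply' (cstep P g) (μ a)] at h
  · set x := (cstep P g)^[μ a] (a, c)
    have hμx : μ x.1 = 0 := by omega
    cases hP : P x.1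
    · unfold cstep; rw [hP]; simp
    · exact absurd (hμ x.1 hP) (by omega)

lemma cstep_stab : ∀ (k a c : ℕ), μ a ≤ k →
    (cstep P g)^[k] (a, c) = (cstep P g)^[μ a] (a, c) := by
  intro k
  induction k with
  | zero => intro a c h; rw [Nat.le_zero.mp h]
  | succ k ih =>
    intro a c h
    rcases Nat.lt_or_ge (μ a) (k+1) with h' | h'
    · rw [Function.iterate_succ_apply' (cstep P g) k, ih a c (by omega),
        cstep_fix P g μ hμ]
    · have : μ a = k + 1 := by omega
      rw [this]

lemma clen_rec (a : ℕ) (ha : P a = true) :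
    clen P g μ a = clen P g μ (g a) + 1 := by
  have h1 : 1 ≤ μ a := by have := hμ a ha; omega
  unfold clen
  have : μ a = (μ a - 1) + 1 := by omega
  rw [this, Function.iterate_succ_apply]
  have hstep : cstep P g (a, 0) = (g a, 1) := by unfold cstep; rw [ha]; simp
  rw [hstep, cstep_shift, cstep_stab P g μ hμ (μ a - 1) (g a) 0 (by have := hμ a ha; omega)]
  omega

end Chain

/-- iterates via Nat.rec, for computability -/
lemma iterate_eq_rec {α : Type*} (g : α → α) : ∀ (k : ℕ) (x : α),
    g^[k] x = Nat.rec x (fun _ ih => g ih) k := by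
  intro k
  induction k with
  | zero => intro x; simp
  | succ k ih => intro x; rw [Function.iterate_succ_apply' g k, ih]

set_option maxHeartbeats 1000000 in
lemma clen_computable {P : ℕ → Bool} {g : ℕ → ℕ} {μ : ℕ → ℕ}
    (hP : Computable P) (hg : Computable g) (hμ : Computable μ) :
    Computable (clen P g μ) := by
  have hstep : Computable (cstep P g) := by
    have hc : Computable fun p : ℕ × ℕ => P p.1 := hP.comp Computable.fst
    have h1 : Computable fun p : ℕ × ℕ => (g p.1, p.2 + 1) :=
      Computable.pair (hg.comp Computable.fst) (Computable.succ.comp Computable.snd)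
    exact Computable.cond hc h1 Computable.id
  have hiter : Computable fun a : ℕ => (cstep P g)^[μ a] (a, 0) := by
    have : Computable fun a : ℕ =>
        (Nat.rec ((a, 0) : ℕ × ℕ) (fun _ ih => cstep P g ih) (μ a) : ℕ × ℕ) :=
      Computable.nat_rec (f := μ) (g := fun a => ((a, 0) : ℕ × ℕ))
        (h := fun _ q => cstep P g q.2) hμ
        (Computable.pair Computable.id (Computable.const 0))
        ((hstep.comp (Computable.snd.comp Computable.snd)).to₂)
    convert this using 1
    funext a
    exact iterate_eq_rec (cstep P g) (μ a) (a, 0)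
  exact Computable.snd.comp hiter

end LermanAux

namespace LermanAux2

section Intervals
variable (f : ℕ → ℕ)

/-- `Fmax f k = max_{i ≤ k} f i`. -/
def Fmax (k : ℕ) : ℕ := Nat.rec (f 0) (fun i ih => max ih (f (i+1))) k

lemma Fmax_spec : ∀ k i, i ≤ k → f i ≤ Fmax f k := by
  intro k
  induction k with
  | zero => intro i hi; rw [Nat.le_zero.mp hi]; exact le_refl _
  | succ k ih =>
    intro i hi
    rcases Nat.lt_or_ge i (k+1) with h | h
    · exact le_trans (ih i (by omega)) (le_max_left _ _)
    · have : i = k + 1 := by omega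
      rw [this]; exact le_max_right _ _

/-- The interval endpoints. -/
def mseq (k : ℕ) : ℕ := Nat.rec 0 (fun _ ih => ih + Fmax f ih + 1) k

lemma mseq_zero : mseq f 0 = 0 := rfl
lemma mseq_succ (k : ℕ) : mseq f (k+1) = mseq f k + Fmax f (mseq f k) + 1 := rfl

lemma mseq_strictMono : StrictMono (mseq f) :=
  strictMono_nat_of_lt_succ (fun k => by rw [mseq_succ]; omega)

lemma mseq_le_apply (k : ℕ) : k ≤ mseq f k := (mseq_strictMono f).le_apply

lemma mseq_closure {n k : ℕ} (h : n ≤ mseq f k) : f n < mseq f (k+1) := by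
  rw [mseq_succ]
  have := Fmax_spec f (mseq f k) n h
  omega

/-- index of the interval containing n -/
def idxA (j n : ℕ) : ℕ :=
  Nat.rec 0 (fun k ih => bif decide (mseq f (k+1) ≤ n) then (k+1) else ih) j

def idxf (n : ℕ) : ℕ := idxA f n n

lemma idxA_zero (n : ℕ) : idxA f 0 n = 0 := rfl
lemma idxA_succ (j n : ℕ) :
    idxA f (j+1) n = bif decide (mseq f (j+1) ≤ n) then (j+1) else idxA f j n := rfl

lemma idxA_le (j n : ℕ) : idxA f j n ≤ j := by
  induction j with
  | zero => exact le_refl _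
  | succ j ih =>
    rw [idxA_succ]
    cases h : decide (mseq f (j+1) ≤ n) <;> simp <;> omega

lemma idxA_lb : ∀ j n, mseq f (idxA f j n) ≤ n := by
  intro j n
  induction j with
  | zero => exact Nat.zero_le n
  | succ j ih =>
    rw [idxA_succ]
    cases h : decide (mseq f (j+1) ≤ n)
    · simpa using ih
    · simpa using of_decide_eq_true h

lemma idxA_max : ∀ j n k, k ≤ j → mseq f k ≤ n → k ≤ idxA f j n := by
  intro j
  induction j with
  | zero => intro n k hk _; omega
  | succ j ih =>
    intro n k hk hm
    rw [idxA_succ]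
    rcases Nat.lt_or_ge k (j+1) with h | h
    · have := ih n k (by omega) hm
      cases h' : decide (mseq f (j+1) ≤ n) <;> simp <;> omega
    · have hk1 : k = j + 1 := by omega
      rw [hk1] at hm
      rw [decide_eq_true hm]
      simp; omega

lemma idxf_lb (n : ℕ) : mseq f (idxf f n) ≤ n := idxA_lb f n n

lemma idxf_ub (n : ℕ) : n < mseq f (idxf f n + 1) := by
  by_contra h
  push_neg at h
  have h1 : idxf f n + 1 ≤ n := le_trans (mseq_le_apply f _) h
  have := idxA_max f n n (idxf f n + 1) h1 h
  unfold idxf at this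
  omega

lemma idxf_eq_of {n k : ℕ} (h1 : mseq f k ≤ n) (h2 : n < mseq f (k+1)) : idxf f n = k := by
  have a1 := idxf_lb f n
  have a2 := idxf_ub f n
  have b1 : idxf f n < k + 1 := (mseq_strictMono f).lt_iff_lt.mp (lt_of_le_of_lt a1 h2)
  have b2 : k < idxf f n + 1 := (mseq_strictMono f).lt_iff_lt.mp (lt_of_le_of_lt h1 a2)
  omega

lemma idxf_mono {a b : ℕ} (h : a ≤ b) : idxf f a ≤ idxf f b := by
  have h1 : mseq f (idxf f a) ≤ b := le_trans (idxf_lb f a) h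
  have h2 := idxf_ub f b
  have := (mseq_strictMono f).lt_iff_lt.mp (lt_of_le_of_lt h1 h2)
  omega

lemma idxf_step {n : ℕ} (h : n < f n) : idxf f (f n) ≤ idxf f n + 1 := by
  have h1 : n ≤ mseq f (idxf f n + 1) := le_of_lt (idxf_ub f n)
  have h2 : f n < mseq f (idxf f n + 2) := mseq_closure f h1
  have h3 : mseq f (idxf f (f n)) ≤ f n := idxf_lb f (f n)
  have := (mseq_strictMono f).lt_iff_lt.mp (lt_of_le_of_lt h3 h2)
  omega

variable (hf : Computable f)
include hf

lemma Fmax_computable : Computable (Fmax f) :=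
  Computable.nat_rec (f := id) (g := fun _ => f 0)
    (h := fun _ q => max q.2 (f (q.1 + 1))) Computable.id (Computable.const (f 0))
    ((Primrec.nat_max.to_comp.comp (Computable.snd.comp Computable.snd)
      (hf.comp (Computable.succ.comp (Computable.fst.comp Computable.snd)))).to₂)

lemma mseq_computable : Computable (mseq f) :=
  Computable.nat_rec (f := id) (g := fun _ => (0 : ℕ))
    (h := fun _ q => q.2 + Fmax f q.2 + 1) Computable.id (Computable.const 0)
    ((Computable.succ.comp ((Primrec.nat_add.to_comp.comp
      (Computable.snd.comp Computable.snd)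
      ((Fmax_computable f hf).comp (Computable.snd.comp Computable.snd))))).to₂)

lemma idxf_computable : Computable (idxf f) := by
  have h1 : Computable₂ fun (n : ℕ) (q : ℕ × ℕ) =>
      bif decide (mseq f (q.1+1) ≤ n) then (q.1+1) else q.2 := by
    have hc : Computable fun p : ℕ × ℕ × ℕ => decide (mseq f (p.2.1 + 1) ≤ p.1) :=
      Primrec.nat_le.decide.to_comp.comp
        ((mseq_computable f hf).comp (Computable.succ.comp (Computable.fst.comp Computable.snd)))
        Computable.fst
    exact (Computable.cond hc (Computable.succ.comp (Computable.fst.comp Computable.snd))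
      (Computable.snd.comp Computable.snd)).to₂
  exact Computable.nat_rec (f := id) (g := fun _ => (0:ℕ))
    (h := fun n q => bif decide (mseq f (q.1+1) ≤ n) then (q.1+1) else q.2)
    Computable.id (Computable.const 0) h1

end Intervals

end LermanAux2

namespace LermanAux3

open LermanAux LermanAux2

lemma computableSet_even {h : ℕ → ℕ} (hh : Computable h) : ComputableSet {n | Even (h n)} :=
  ⟨fun n => decide (h n % 2 = 0),
    Primrec.eq.decide.to_comp.comp (Primrec.nat_mod.to_comp.comp hh (Computable.const 2))
      (Computable.const 0),
    fun n => by simp [Nat.even_iff]⟩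

lemma pairs_contra (C : Set ℕ) (hC : RCohesive C) (f : ℕ → ℕ) (X : Set ℕ)
    (hX : ComputableSet X) (T : Set ℕ) (hT : T.Infinite) (hTC : T ⊆ C)
    (hfC : ∀ t ∈ T, f t ∈ C) (hinj : Set.InjOn f T)
    (hsep : ∀ t ∈ T, (t ∈ X ↔ f t ∉ X)) : False := by
  classical
  have hsplit : T ∩ X ∪ T \ X = T := Set.inter_union_diff T X
  have hcase : (T ∩ X).Infinite ∨ (T \ X).Infinite := by
    by_contra h
    push_neg at h
    exact hT (by rw [← hsplit]; exact h.1.union h.2)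
  rcases hcase with h1 | h1
  · have e1 : (X ∩ C).Infinite :=
      h1.mono (fun t ht => ⟨ht.2, hTC ht.1⟩)
    have e2 : (Xᶜ ∩ C).Infinite := by
      refine (h1.image (hinj.mono Set.inter_subset_left)).mono ?_
      rintro _ ⟨t, ⟨htT, htX⟩, rfl⟩
      exact ⟨(hsep t htT).mp htX, hfC t htT⟩
    rcases hC.2 X hX with h | h
    · exact e1 h
    · exact e2 h
  · have e2 : (Xᶜ ∩ C).Infinite :=
      h1.mono (fun t ht => ⟨ht.2, hTC ht.1⟩)
    have e1 : (X ∩ C).Infinite := by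
      refine (h1.image (hinj.mono Set.diff_subset)).mono ?_
      rintro _ ⟨t, ⟨htT, htX⟩, rfl⟩
      refine ⟨?_, hfC t htT⟩
      by_contra hfX
      exact htX ((hsep t htT).mpr hfX)
    rcases hC.2 X hX with h | h
    · exact e1 h
    · exact e2 h

section Preds
variable (f : ℕ → ℕ)

/-- Predicate for the decreasing chain. -/
def P2 (a : ℕ) : Bool := decide (f a < a)

/-- Predicate for the increasing within-interval chain. -/
def P3 (a : ℕ) : Bool := decide (a < f a) && decide (idxf f (f a) = idxf f a)

/-- Fuel for the increasing chain. -/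
def mu3 (a : ℕ) : ℕ := mseq f (idxf f a + 1) - a

lemma P2_iff (a : ℕ) : P2 f a = true ↔ f a < a := by simp [P2]

lemma P3_iff (a : ℕ) : P3 f a = true ↔ (a < f a ∧ idxf f (f a) = idxf f a) := by
  simp [P3]

lemma P2_dec : ∀ a, P2 f a = true → id (f a) < id a := by
  intro a h
  simpa using (P2_iff f a).mp h

lemma mu3_dec : ∀ a, P3 f a = true → mu3 f (f a) < mu3 f a := by
  intro a h
  obtain ⟨h1, h2⟩ := (P3_iff f a).mp h
  have hub : a < mseq f (idxf f a + 1) := idxf_ub f a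
  unfold mu3
  rw [h2]
  exact Nat.sub_lt_sub_left hub h1

/-- Decreasing chain length. -/
def clen2 : ℕ → ℕ := clen (P2 f) f id

/-- Increasing within-interval chain length. -/
def clen3 : ℕ → ℕ := clen (P3 f) f (mu3 f)

lemma clen2_flip {a : ℕ} (h : f a < a) : Even (clen2 f a) ↔ ¬ Even (clen2 f (f a)) := by
  have := clen_rec (P2 f) f id (P2_dec f) a ((P2_iff f a).mpr h)
  unfold clen2
  rw [this, Nat.even_add_one]

lemma clen3_flip {a : ℕ} (h1 : a < f a) (h2 : idxf f (f a) = idxf f a) :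
    Even (clen3 f a) ↔ ¬ Even (clen3 f (f a)) := by
  have := clen_rec (P3 f) f (mu3 f) (mu3_dec f) a ((P3_iff f a).mpr ⟨h1, h2⟩)
  unfold clen3
  rw [this, Nat.even_add_one]

variable (hf : Computable f)
include hf

lemma P2_computable : Computable (P2 f) :=
  Primrec.nat_lt.decide.to_comp.comp hf Computable.id

lemma P3_computable : Computable (P3 f) := by
  have h1 : Computable fun a => decide (a < f a) :=
    Primrec.nat_lt.decide.to_comp.comp Computable.id hf
  have h2 : Computable fun a => decide (idxf f (f a) = idxf f a) :=
    Primrec.eq.decide.to_comp.comp ((idxf_computable f hf).comp hf) (idxf_computable f hf)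
  have h3 : Computable fun a => bif decide (a < f a) then decide (idxf f (f a) = idxf f a)
      else false := Computable.cond h1 h2 (Computable.const false)
  convert h3 using 1
  funext a
  unfold P3
  cases hd : decide (a < f a) <;> simp [hd]

lemma mu3_computable : Computable (mu3 f) :=
  Primrec.nat_sub.to_comp.comp
    ((mseq_computable f hf).comp (Computable.succ.comp (idxf_computable f hf)))
    Computable.id

lemma clen2_computable : Computable (clen2 f) :=
  clen_computable (P2_computable f hf) hf Computable.id

lemma clen3_computable : Computable (clen3 f) :=
  clen_computable (P3_computable f hf) hf (mu3_computable f hf)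

end Preds

end LermanAux3

/-- Lerman: if `R` is co-r-maximal and `f` is a total computable function with
`f(R) ∩ R` infinite, then `f` restricted to `R` is almost the identity. -/
theorem computable_map_on_co_r_maximal (R : Set ℕ) (hR : RCohesive R)
    (hce : CESet Rᶜ) (f : ℕ → ℕ) (hf : Computable f)
    (hinf : (f '' R ∩ R).Infinite) :
    {n | n ∈ R ∧ f n ≠ n}.Finite := by
  classical
  open LermanAux LermanAux2 LermanAux3 in
  have hch : ∀ m, m ∈ f '' R ∩ R → ∃ t, t ∈ R ∧ f t = m := by
    rintro m ⟨⟨t, ht, rfl⟩, -⟩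
    exact ⟨t, ht, rfl⟩
  choose! q hq1 hq2 using hch
  set T0 : Set ℕ := q '' (f '' R ∩ R) with hT0def
  have hqinj : Set.InjOn q (f '' R ∩ R) := by
    intro m1 h1 m2 h2 he
    rw [← hq2 m1 h1, ← hq2 m2 h2, he]
  have hT0inf : T0.Infinite := hinf.image hqinj
  have hT0R : T0 ⊆ R := by rintro _ ⟨m, hm, rfl⟩; exact hq1 m hm
  have hT0f : ∀ t ∈ T0, f t ∈ R := by
    rintro _ ⟨m, hm, rfl⟩
    rw [hq2 m hm]
    exact hm.2
  have hT0inj : Set.InjOn f T0 := by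
    rintro _ ⟨m1, h1, rfl⟩ _ ⟨m2, h2, rfl⟩ he
    rw [hq2 m1 h1, hq2 m2 h2] at he
    rw [he]
  have hWeqc : ComputableSet {n | f n = n} :=
    ⟨fun n => decide (f n = n), Primrec.eq.decide.to_comp.comp hf Computable.id, fun n => by simp⟩
  rcases hR.2 _ hWeqc with heq | hne
  swap
  · exact hne.subset (fun n hn => ⟨hn.2, hn.1⟩)
  exfalso
  have hWltc : ComputableSet {n | f n < n} :=
    ⟨fun n => decide (f n < n), Primrec.nat_lt.decide.to_comp.comp hf Computable.id,
      fun n => by simp⟩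
  rcases hR.2 _ hWltc with hlt | hge
  · -- increasing case: `f n > n` for almost every `n ∈ R`
    have hBc : ComputableSet {n | Even (idxf f n)} :=
      computableSet_even (idxf_computable f hf)
    have hgood : ∃ S2 : Set ℕ, S2.Finite ∧ ∀ t, t ∈ R → f t ∈ R → t ∉ S2 → f t ∉ S2 →
        (Even (idxf f t) ↔ Even (idxf f (f t))) := by
      rcases hR.2 _ hBc with h | h
      · exact ⟨{n | Even (idxf f n)} ∩ R, h, fun t htR hftR ht hft =>
          iff_of_false (fun he => ht ⟨he, htR⟩) (fun he => hft ⟨he, hftR⟩)⟩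
      · refine ⟨{n | Even (idxf f n)}ᶜ ∩ R, h, fun t htR hftR ht hft =>
          iff_of_true ?_ ?_⟩
        · by_contra he
          exact ht ⟨he, htR⟩
        · by_contra he
          exact hft ⟨he, hftR⟩
    obtain ⟨S2, hS2fin, hS2⟩ := hgood
    have hpre : (T0 ∩ f ⁻¹' S2).Finite := by
      refine Set.Finite.of_finite_image (hS2fin.subset ?_) (hT0inj.mono Set.inter_subset_left)
      rintro _ ⟨t, ⟨-, ht⟩, rfl⟩
      exact ht
    set Bad : Set ℕ := ({n | f n < n} ∩ R) ∪ ({n | f n = n} ∩ R) ∪ S2 ∪ (T0 ∩ f ⁻¹' S2)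
      with hBaddef
    have hBadfin : Bad.Finite := ((hlt.union heq).union hS2fin).union hpre
    have hT'inf : (T0 \ Bad).Infinite := hT0inf.diff hBadfin
    have hprop : ∀ t ∈ T0 \ Bad, t < f t ∧ idxf f (f t) = idxf f t := by
      intro t ht
      have htT0 := ht.1
      have htR := hT0R htT0
      have hftR := hT0f t htT0
      have hnb := ht.2
      rw [hBaddef] at hnb
      simp only [Set.mem_union, Set.mem_inter_iff, Set.mem_setOf_eq, Set.mem_preimage,
        not_or] at hnb
      obtain ⟨⟨⟨hnb1, hnb2⟩, hnb3⟩, hnb4⟩ := hnb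
      have h1 : t < f t := by
        rcases Nat.lt_trichotomy (f t) t with h | h | h
        · exact absurd ⟨h, htR⟩ hnb1
        · exact absurd ⟨h, htR⟩ hnb2
        · exact h
      have hft_nS2 : f t ∉ S2 := fun h => hnb4 ⟨htT0, h⟩
      have hpar := hS2 t htR hftR hnb3 hft_nS2
      have hm1 : idxf f t ≤ idxf f (f t) := idxf_mono f (le_of_lt h1)
      have hm2 : idxf f (f t) ≤ idxf f t + 1 := idxf_step f h1
      refine ⟨h1, ?_⟩
      rcases Nat.lt_or_ge (idxf f (f t)) (idxf f t + 1) with h | h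
      · omega
      · exfalso
        have he : idxf f (f t) = idxf f t + 1 := by omega
        rw [he, Nat.even_add_one] at hpar
        tauto
    refine pairs_contra R hR f {n | Even (clen3 f n)}
      (computableSet_even (clen3_computable f hf)) (T0 \ Bad) hT'inf
      (fun t ht => hT0R ht.1) (fun t ht => hT0f t ht.1)
      (hT0inj.mono Set.diff_subset) ?_
    intro t ht
    obtain ⟨h1, h2⟩ := hprop t ht
    simpa using clen3_flip f h1 h2
  · -- decreasing case: `f n < n` for almost every `n ∈ R`
    have hT'inf : (T0 \ ({n | f n < n}ᶜ ∩ R)).Infinite := hT0inf.diff hge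
    refine pairs_contra R hR f {n | Even (clen2 f n)}
      (computableSet_even (clen2_computable f hf)) _ hT'inf
      (fun t ht => hT0R ht.1) (fun t ht => hT0f t ht.1)
      (hT0inj.mono Set.diff_subset) ?_
    intro t ht
    have htR := hT0R ht.1
    have h1 : f t < t := by
      by_contra h
      exact ht.2 ⟨h, htR⟩
    simpa using clen2_flip f h1
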